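/- Let k ≥ d and let A be a real k×n matrix, viewed as a linear map ℝ^n → ℝ^k, so that for x ∈ Lip(□^d, ℝ^n) the composite Ax lies in Lip(□^d, ℝ^k). For P ∈ O_{d,k} and Q ∈ O_{d,n}, let A[P,Q] denote the d×d submatrix of A with (i,j) entry A_{P(i),Q(j)}. Then for every m ≥ 1, every P = (P_1,…,P_m) ∈ O_{d,k}^m, and every π ∈ Σ_m^d: Φ_m^{P,π}(Ax) = Σ over (Q_1,…,Q_m) ∈ O_{d,n}^m of (∏_{i=1}^m det A[P_i,Q_i]) · Φ_m^{(Q_1,…,Q_m),π}(x). (This is the coordinate form of the equivariance Φ_m^π(Ax) = (Λ^d A)^{⊗m} Φ_m^π(x).) -/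

import Mathlib

open MeasureTheory

open scoped Classical

noncomputable section

/-- The unit cube `[0,1]^d` as a subset of `Fin d → ℝ`. -/
def unitCube (d : ℕ) : Set (Fin d → ℝ) := Set.Icc 0 1

/-- Lipschitz condition with constant `L`, with respect to Euclidean norms. -/
def EuclidLip {d n : ℕ} (L : ℝ) (x : (Fin d → ℝ) → Fin n → ℝ) : Prop :=
  ∀ s t : Fin d → ℝ,
    Real.sqrt (∑ k, (x s k - x t k) ^ 2) ≤ L * Real.sqrt (∑ j, (s j - t j) ^ 2)

/-- Lipschitz map. -/
def IsLipMap {d n : ℕ} (x : (Fin d → ℝ) → Fin n → ℝ) : Prop :=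
  ∃ L : ℝ, EuclidLip L x

/-- The Jacobian minor `J[x_P](s)`: the determinant of the `d × d` matrix
with `(i,j)` entry `∂ x_{P i} / ∂ s_j (s)`. -/
def jacobianMinor {d n : ℕ} (x : (Fin d → ℝ) → Fin n → ℝ) (P : Fin d → Fin n)
    (s : Fin d → ℝ) : ℝ :=
  (Matrix.of fun i j : Fin d => fderiv ℝ (fun t => x t (P i)) s (Pi.single j 1)).det

/-- The permuted `m`-simplex `Δ^m_π(a,b)`. -/
def permSimplex {m : ℕ} (π : Equiv.Perm (Fin m)) (a b : ℝ) : Set (Fin m → ℝ) :=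
  {u | (∀ i, u i ∈ Set.Icc a b) ∧ StrictMono fun i => u (π i)}

/-- The integration domain `D^{m,d}_π(a,b) = Δ^m_{π 1}(a₁,b₁) × ⋯ × Δ^m_{π d}(a_d,b_d)`. -/
def intDomain {m d : ℕ} (π : Fin d → Equiv.Perm (Fin m)) (a b : Fin d → ℝ) :
    Set (Fin m → Fin d → ℝ) :=
  {t | ∀ j, (fun i => t i j) ∈ permSimplex (π j) (a j) (b j)}

/-- The restricted mapping space monomial `Φ_m^{P,π}(x)_{a,b}`. -/
def msMonomialOn {d n m : ℕ} (x : (Fin d → ℝ) → Fin n → ℝ)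
    (P : Fin m → Fin d → Fin n) (π : Fin d → Equiv.Perm (Fin m))
    (a b : Fin d → ℝ) : ℝ :=
  ∫ t in intDomain π a b, ∏ i, jacobianMinor x (P i) (t i)

/-- The mapping space monomial `Φ_m^{P,π}(x)`. -/
def msMonomial {d n m : ℕ} (x : (Fin d → ℝ) → Fin n → ℝ)
    (P : Fin m → Fin d → Fin n) (π : Fin d → Equiv.Perm (Fin m)) : ℝ :=
  msMonomialOn x P π (fun _ => 0) (fun _ => 1)

open Finset Equiv in
theorem my_cauchyBinet {d n : ℕ} (B : Matrix (Fin d) (Fin n) ℝ) (M : Matrix (Fin n) (Fin d) ℝ) :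
    (B * M).det = ∑ Q ∈ Finset.univ.filter (fun Q : Fin d → Fin n => StrictMono Q),
      (B.submatrix id Q).det * (M.submatrix Q id).det := by
  classical
  have step1 : (B * M).det
      = ∑ f : Fin d → Fin n, ∑ σ : Equiv.Perm (Fin d),
          ((Equiv.Perm.sign σ : ℤ) : ℝ) * ∏ i, B (σ i) (f i) * M (f i) i := by
    simp only [Matrix.det_apply', Matrix.mul_apply, Finset.prod_univ_sum, Finset.mul_sum,
      Fintype.piFinset_univ]
    rw [Finset.sum_comm]
  have step2 : ∀ f : Fin d → Fin n,
      (∑ σ : Equiv.Perm (Fin d), ((Equiv.Perm.sign σ : ℤ) : ℝ) * ∏ i, B (σ i) (f i) * M (f i) i)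
        = (∏ i, M (f i) i) * (B.submatrix id f).det := by
    intro f
    rw [Matrix.det_apply', Finset.mul_sum]
    refine Finset.sum_congr rfl fun σ _ => ?_
    rw [Finset.prod_mul_distrib]
    simp only [Matrix.submatrix_apply, id_eq]
    ring
  rw [step1]
  simp only [step2]
  -- restrict to injective f
  have step3 : (∑ f : Fin d → Fin n, (∏ i, M (f i) i) * (B.submatrix id f).det)
      = ∑ f ∈ Finset.univ.filter (fun f : Fin d → Fin n => Function.Injective f),
          (∏ i, M (f i) i) * (B.submatrix id f).det := by
    refine (Finset.sum_subset (Finset.filter_subset _ _) ?_).symm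
    intro f _ hf
    simp only [Finset.mem_filter, Finset.mem_univ, true_and] at hf
    rw [Function.Injective] at hf
    push_neg at hf
    obtain ⟨a, b, hab, hne⟩ := hf
    have : (B.submatrix id f).det = 0 :=
      Matrix.det_zero_of_column_eq hne (fun k => by simp [hab])
    rw [this, mul_zero]
  rw [step3]
  -- expand RHS: each strict-mono Q contributes one perm-orbit
  have hQexp : ∀ Q ∈ Finset.univ.filter (fun Q : Fin d → Fin n => StrictMono Q),
      (B.submatrix id Q).det * (M.submatrix Q id).det
        = ∑ τ : Equiv.Perm (Fin d), (∏ i, M ((Q ∘ τ) i) i) * (B.submatrix id (Q ∘ τ)).det := by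
    intro Q _
    rw [Matrix.det_apply' (M.submatrix Q id), Finset.mul_sum]
    refine Finset.sum_congr rfl fun τ _ => ?_
    have hsub : B.submatrix id (Q ∘ ⇑τ) = (B.submatrix id Q).submatrix id ⇑τ := by
      ext i j; simp
    have : (B.submatrix id (Q ∘ ⇑τ)).det = ((Equiv.Perm.sign τ : ℤ) : ℝ) * (B.submatrix id Q).det := by
      rw [hsub, Matrix.det_permute']
    rw [this]
    simp only [Matrix.submatrix_apply, Function.comp_apply, id_eq]
    ring
  rw [Finset.sum_congr rfl hQexp]
  -- now a bijection between injective maps and pairs (Q, τ)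
  rw [← Finset.sum_product']
  refine Finset.sum_nbij' (i := fun f => (f ∘ (Tuple.sort f), (Tuple.sort f)⁻¹))
    (j := fun p => p.1 ∘ p.2) ?_ ?_ ?_ ?_ ?_
  · -- maps into product set
    intro f hf
    simp only [Finset.mem_filter, Finset.mem_univ, true_and] at hf
    simp only [Finset.mem_product, Finset.mem_filter, Finset.mem_univ, true_and]
    refine ⟨?_, trivial⟩
    exact (Tuple.monotone_sort f).strictMono_of_injective (hf.comp (Equiv.injective _))
  · -- maps back into injective set
    rintro ⟨Q, τ⟩ hp
    simp only [Finset.mem_product, Finset.mem_filter, Finset.mem_univ, true_and] at hp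
    simp only [Finset.mem_filter, Finset.mem_univ, true_and]
    exact hp.1.injective.comp (Equiv.injective _)
  · -- left inverse
    intro f hf
    funext y
    simp
  · -- right inverse
    rintro ⟨Q, τ⟩ hp
    simp only [Finset.mem_product, Finset.mem_filter, Finset.mem_univ, true_and] at hp
    have hQ : StrictMono Q := hp.1
    set f : Fin d → Fin n := Q ∘ τ with hfdef
    have hfinj : Function.Injective f := hQ.injective.comp (Equiv.injective _)
    have hcard : (Finset.image f Finset.univ).card = d := by
      rw [Finset.card_image_of_injective _ hfinj, Finset.card_univ, Fintype.card_fin]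
    have h1 : f ∘ (Tuple.sort f) = (Finset.image f Finset.univ).orderEmbOfFin hcard := by
      refine Finset.orderEmbOfFin_unique hcard (fun y => ?_) ?_
      · exact Finset.mem_image_of_mem _ (Finset.mem_univ _)
      · exact (Tuple.monotone_sort f).strictMono_of_injective (hfinj.comp (Equiv.injective _))
    have h2 : Q = (Finset.image f Finset.univ).orderEmbOfFin hcard := by
      refine Finset.orderEmbOfFin_unique hcard (fun y => ?_) hQ
      · refine Finset.mem_image.2 ⟨τ.symm y, Finset.mem_univ _, ?_⟩
        simp [hfdef]
    have hQeq : f ∘ (Tuple.sort f) = Q := h1.trans h2.symm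
    have hτ : (Tuple.sort f)⁻¹ = τ := by
      have : Q ∘ (τ : Fin d → Fin d) ∘ (Tuple.sort f : Fin d → Fin d) = Q ∘ id := by
        simpa [hfdef, Function.comp_assoc] using hQeq
      have h3 : (τ : Fin d → Fin d) ∘ (Tuple.sort f : Fin d → Fin d) = id := by
        funext y
        exact hQ.injective (congrFun this y)
      ext y
      have := congrFun h3 ((Tuple.sort f)⁻¹ y)
      simp at this
      simp [this]
    rw [Prod.mk.injEq]
    exact ⟨hQeq, hτ⟩
  · -- values agree
    intro f hf
    have hcomp : (f ∘ ⇑(Tuple.sort f)) ∘ ⇑(Tuple.sort f)⁻¹ = f := by funext y; simp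
    simp only [hcomp]

theorem coordLip {d n : ℕ} {L : ℝ} {x : (Fin d → ℝ) → Fin n → ℝ} (hL : EuclidLip L x)
    (j : Fin n) :
    LipschitzWith ⟨max L 0 * Real.sqrt d, by positivity⟩ (fun s => x s j) := by
  apply LipschitzWith.of_dist_le_mul
  intro s t
  have h1 : dist (x s j) (x t j) ≤ Real.sqrt (∑ k, (x s k - x t k) ^ 2) := by
    rw [Real.dist_eq, ← Real.sqrt_sq_eq_abs]
    apply Real.sqrt_le_sqrt
    exact Finset.single_le_sum (f := fun k => (x s k - x t k) ^ 2) (fun k _ => sq_nonneg _) (Finset.mem_univ j)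
  have h2 : Real.sqrt (∑ k, (s k - t k) ^ 2) ≤ Real.sqrt d * dist s t := by
    have hb : (∑ k, (s k - t k) ^ 2) ≤ (d : ℝ) * dist s t ^ 2 := by
      calc (∑ k, (s k - t k) ^ 2) ≤ ∑ _k : Fin d, dist s t ^ 2 := by
            refine Finset.sum_le_sum fun k _ => ?_
            have := dist_le_pi_dist s t k
            rw [Real.dist_eq] at this
            calc (s k - t k) ^ 2 = |s k - t k| ^ 2 := (sq_abs _).symm
              _ ≤ dist s t ^ 2 := by
                  exact pow_le_pow_left₀ (abs_nonneg _) this 2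
        _ = (d : ℝ) * dist s t ^ 2 := by simp [Finset.sum_const, mul_comm]
    calc Real.sqrt (∑ k, (s k - t k) ^ 2) ≤ Real.sqrt ((d : ℝ) * dist s t ^ 2) :=
          Real.sqrt_le_sqrt hb
      _ = Real.sqrt d * dist s t := by
          rw [Real.sqrt_mul (Nat.cast_nonneg d), Real.sqrt_sq dist_nonneg]
  calc dist (x s j) (x t j) ≤ Real.sqrt (∑ k, (x s k - x t k) ^ 2) := h1
    _ ≤ L * Real.sqrt (∑ k, (s k - t k) ^ 2) := hL s t
    _ ≤ max L 0 * (Real.sqrt d * dist s t) := by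
        calc L * Real.sqrt (∑ k, (s k - t k) ^ 2)
            ≤ max L 0 * Real.sqrt (∑ k, (s k - t k) ^ 2) :=
              mul_le_mul_of_nonneg_right (le_max_left _ _) (Real.sqrt_nonneg _)
          _ ≤ max L 0 * (Real.sqrt d * dist s t) :=
              mul_le_mul_of_nonneg_left h2 (le_max_right _ _)
    _ = max L 0 * Real.sqrt d * dist s t := by ring

-- determinant bound

theorem det_abs_le {d : ℕ} (N : Matrix (Fin d) (Fin d) ℝ) {c : ℝ}
    (h : ∀ i j, |N i j| ≤ c) : |N.det| ≤ (Nat.factorial d : ℝ) * c ^ d := by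
  cases d with
  | zero => simp [Matrix.det_fin_zero]
  | succ d' =>
    have hc : 0 ≤ c := (abs_nonneg _).trans (h 0 0)
    rw [Matrix.det_apply']
    refine le_trans (Finset.abs_sum_le_sum_abs _ _) ?_
    have hstep : ∀ σ : Equiv.Perm (Fin (d' + 1)),
        |((Equiv.Perm.sign σ : ℤ) : ℝ) * ∏ i, N (σ i) i| ≤ c ^ (d' + 1) := by
      intro σ
      rw [abs_mul]
      have hsign : |((Equiv.Perm.sign σ : ℤ) : ℝ)| = 1 := by
        rcases Int.units_eq_one_or (Equiv.Perm.sign σ) with h1 | h1 <;> simp [h1]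
      rw [hsign, one_mul, Finset.abs_prod]
      calc ∏ i, |N (σ i) i| ≤ ∏ _i : Fin (d' + 1), c :=
            Finset.prod_le_prod (fun _ _ => abs_nonneg _) (fun i _ => h _ _)
        _ = c ^ (d' + 1) := by simp
    refine le_trans (Finset.sum_le_sum fun σ _ => hstep σ) ?_
    rw [Finset.sum_const, Finset.card_univ, Fintype.card_perm, Fintype.card_fin, nsmul_eq_mul]

-- measurability

theorem jac_measurable {d n : ℕ} (x : (Fin d → ℝ) → Fin n → ℝ) (Q : Fin d → Fin n) :
    Measurable (jacobianMinor x Q) := by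
  unfold jacobianMinor
  simp only [Matrix.det_apply']
  apply Finset.measurable_sum
  intro σ _
  apply Measurable.const_mul
  apply Finset.measurable_prod
  intro i _
  exact measurable_fderiv_apply_const ℝ _ _

-- bound on jacobianMinor

theorem jac_bound {d n : ℕ} {x : (Fin d → ℝ) → Fin n → ℝ} {C : NNReal}
    (hlip : ∀ j, LipschitzWith C (fun s => x s j)) (Q : Fin d → Fin n) (s : Fin d → ℝ) :
    |jacobianMinor x Q s| ≤ (Nat.factorial d : ℝ) * (C : ℝ) ^ d := by
  apply det_abs_le
  intro i j
  have h1 : ‖fderiv ℝ (fun t => x t (Q i)) s‖ ≤ (C : ℝ) :=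
    norm_fderiv_le_of_lipschitz ℝ (hlip (Q i))
  have h2 : ‖(Pi.single j 1 : Fin d → ℝ)‖ = 1 := by
    simp [Pi.norm_single]
  calc |(Matrix.of fun i j : Fin d => fderiv ℝ (fun t => x t (Q i)) s (Pi.single j 1)) i j|
      = ‖fderiv ℝ (fun t => x t (Q i)) s (Pi.single j 1)‖ := by
        simp [Real.norm_eq_abs]
    _ ≤ ‖fderiv ℝ (fun t => x t (Q i)) s‖ * ‖(Pi.single j 1 : Fin d → ℝ)‖ :=
        ContinuousLinearMap.le_opNorm _ _
    _ ≤ (C : ℝ) := by rw [h2, mul_one]; exact h1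

theorem jac_comp {d n k : ℕ} (A : Matrix (Fin k) (Fin n) ℝ)
    (x : (Fin d → ℝ) → Fin n → ℝ) (P : Fin d → Fin k) (s : Fin d → ℝ)
    (hs : ∀ j, DifferentiableAt ℝ (fun t => x t j) s) :
    jacobianMinor (fun u => A.mulVec (x u)) P s
      = ∑ Q ∈ Finset.univ.filter (fun Q : Fin d → Fin n => StrictMono Q),
          (A.submatrix P Q).det * jacobianMinor x Q s := by
  classical
  have hmat : (Matrix.of fun i j' : Fin d =>
        fderiv ℝ (fun t => (fun u => A.mulVec (x u)) t (P i)) s (Pi.single j' 1))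
      = (A.submatrix P id) * (Matrix.of fun (j : Fin n) (j' : Fin d) =>
          fderiv ℝ (fun t => x t j) s (Pi.single j' 1)) := by
    ext i j'
    have hfun : (fun t => (fun u => A.mulVec (x u)) t (P i))
        = fun t => ∑ j, A (P i) j * x t j := by
      funext t
      simp [Matrix.mulVec, dotProduct]
    rw [Matrix.of_apply, hfun]
    have hdiff : ∀ j ∈ Finset.univ, DifferentiableAt ℝ (fun t => A (P i) j * x t j) s :=
      fun j _ => (hs j).const_mul _
    rw [fderiv_fun_sum hdiff]
    have : ∀ j : Fin n, fderiv ℝ (fun t => A (P i) j * x t j) s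
        = A (P i) j • fderiv ℝ (fun t => x t j) s := fun j => fderiv_const_mul (hs j) _
    simp only [this]
    rw [ContinuousLinearMap.sum_apply]
    simp [Matrix.mul_apply, Matrix.submatrix_apply]
  have : jacobianMinor (fun u => A.mulVec (x u)) P s
      = ((A.submatrix P id) * (Matrix.of fun (j : Fin n) (j' : Fin d) =>
          fderiv ℝ (fun t => x t j) s (Pi.single j' 1))).det := by
    rw [jacobianMinor, hmat]
  rw [this, my_cauchyBinet]
  refine Finset.sum_congr rfl fun Q hQ => ?_
  have h1 : (A.submatrix P id).submatrix id Q = A.submatrix P Q := by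
    ext i j; simp
  have h2 : ((Matrix.of fun (j : Fin n) (j' : Fin d) =>
      fderiv ℝ (fun t => x t j) s (Pi.single j' 1)).submatrix Q id).det
      = jacobianMinor x Q s := by
    rw [jacobianMinor]
    congr 1
  rw [h1, h2]

theorem stmt16 (d n k m : ℕ) (hd : 1 ≤ d) (hn : d ≤ n) (hk : d ≤ k) (hm : 1 ≤ m)
    (A : Matrix (Fin k) (Fin n) ℝ)
    (x : (Fin d → ℝ) → Fin n → ℝ) (hx : IsLipMap x)
    (P : Fin m → Fin d → Fin k) (hP : ∀ i, StrictMono (P i))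
    (π : Fin d → Equiv.Perm (Fin m)) :
    msMonomial (fun s => A.mulVec (x s)) P π =
      ∑ Q ∈ Finset.univ.filter (fun Q : Fin m → Fin d → Fin n => ∀ i, StrictMono (Q i)),
        (∏ i, (A.submatrix (P i) (Q i)).det) * msMonomial x Q π := by
  classical
  obtain ⟨L, hL⟩ := hx
  set C : NNReal := ⟨max L 0 * Real.sqrt d, by positivity⟩ with hC
  have hlip : ∀ j, LipschitzWith C (fun s => x s j) := fun j => coordLip hL j
  set K : ℝ := (Nat.factorial d : ℝ) * (C : ℝ) ^ d with hK
  have hbd : ∀ (Q : Fin d → Fin n) (s : Fin d → ℝ), |jacobianMinor x Q s| ≤ K :=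
    fun Q s => jac_bound hlip Q s
  unfold msMonomial msMonomialOn
  set D : Set (Fin m → Fin d → ℝ) := intDomain π (fun _ => 0) (fun _ => 1) with hD
  have hDsub : D ⊆ Set.Icc (0 : Fin m → Fin d → ℝ) 1 := by
    intro t ht
    rw [Set.mem_Icc]
    constructor <;> (rw [Pi.le_def]; intro i; rw [Pi.le_def]; intro j)
    · exact ((ht j).1 i).1
    · exact ((ht j).1 i).2
  have hDfin : volume D < ⊤ :=
    lt_of_le_of_lt (measure_mono hDsub) (isCompact_Icc.measure_lt_top)
  have hint : ∀ Q : Fin m → Fin d → Fin n,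
      Integrable (fun t : Fin m → Fin d → ℝ => ∏ i, jacobianMinor x (Q i) (t i))
        (volume.restrict D) := by
    intro Q
    have hmeas : Measurable (fun t : Fin m → Fin d → ℝ => ∏ i, jacobianMinor x (Q i) (t i)) :=
      Finset.measurable_prod _ fun i _ => (jac_measurable x (Q i)).comp (measurable_pi_apply i)
    refine Integrable.mono' (g := fun _ => K ^ m) ?_ hmeas.aestronglyMeasurable ?_
    · exact integrableOn_const hDfin.ne
    · refine Filter.Eventually.of_forall fun t => ?_
      rw [Real.norm_eq_abs, Finset.abs_prod]
      calc ∏ i, |jacobianMinor x (Q i) (t i)| ≤ ∏ _i : Fin m, K :=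
            Finset.prod_le_prod (fun _ _ => abs_nonneg _) (fun i _ => hbd _ _)
        _ = K ^ m := by simp
  -- a.e. differentiability of all coordinates at all rows
  have hae1 : ∀ᵐ s : (Fin d → ℝ), ∀ j, DifferentiableAt ℝ (fun t => x t j) s :=
    (MeasureTheory.ae_all_iff).2 fun j => (hlip j).ae_differentiableAt
  set N : Set (Fin d → ℝ) := {s | ¬ ∀ j, DifferentiableAt ℝ (fun t => x t j) s} with hN
  have hNnull : volume N = 0 := hae1
  have hae2 : ∀ᵐ t : (Fin m → Fin d → ℝ), ∀ i j, DifferentiableAt ℝ (fun s' => x s' j) (t i) := by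
    rw [MeasureTheory.ae_iff]
    have hsub2 : {a : Fin m → Fin d → ℝ | ¬ ∀ i j, DifferentiableAt ℝ (fun s' => x s' j) (a i)}
        ⊆ ⋃ i : Fin m, {t : Fin m → Fin d → ℝ | t i ∈ N} := by
      intro t ht
      simp only [Set.mem_setOf_eq] at ht
      push_neg at ht
      obtain ⟨i, j, hij⟩ := ht
      refine Set.mem_iUnion.2 ⟨i, ?_⟩
      exact fun hall => hij (hall j)
    refine measure_mono_null hsub2 ?_
    refine measure_iUnion_null fun i => ?_
    have hset : {t : Fin m → Fin d → ℝ | t i ∈ N}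
        = Set.pi Set.univ (fun i' => if i' = i then N else Set.univ) := by
      ext t
      simp only [Set.mem_univ_pi, Set.mem_setOf_eq]
      constructor
      · intro h i'
        by_cases hii : i' = i
        · subst hii; simp [h]
        · simp [hii]
      · intro h
        have := h i
        simpa using this
    rw [hset, MeasureTheory.volume_pi_pi]
    refine Finset.prod_eq_zero (Finset.mem_univ i) ?_
    simp [hNnull]
  have hfil : Fintype.piFinset (fun _ : Fin m =>
        Finset.univ.filter (fun q : Fin d → Fin n => StrictMono q))
      = Finset.univ.filter (fun Q : Fin m → Fin d → Fin n => ∀ i, StrictMono (Q i)) := by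
    ext Q
    simp [Fintype.mem_piFinset]
  have key : (fun t : Fin m → Fin d → ℝ =>
        ∏ i, jacobianMinor (fun u => A.mulVec (x u)) (P i) (t i))
      =ᵐ[volume.restrict D]
      (fun t => ∑ Q ∈ Finset.univ.filter
          (fun Q : Fin m → Fin d → Fin n => ∀ i, StrictMono (Q i)),
        (∏ i, (A.submatrix (P i) (Q i)).det) * ∏ i, jacobianMinor x (Q i) (t i)) := by
    refine MeasureTheory.ae_restrict_of_ae ?_
    filter_upwards [hae2] with t ht
    have hterm : ∀ i : Fin m, jacobianMinor (fun u => A.mulVec (x u)) (P i) (t i)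
        = ∑ q ∈ Finset.univ.filter (fun q : Fin d → Fin n => StrictMono q),
            (A.submatrix (P i) q).det * jacobianMinor x q (t i) :=
      fun i => jac_comp A x (P i) (t i) (fun j => ht i j)
    calc ∏ i, jacobianMinor (fun u => A.mulVec (x u)) (P i) (t i)
        = ∏ i, ∑ q ∈ Finset.univ.filter (fun q : Fin d → Fin n => StrictMono q),
            (A.submatrix (P i) q).det * jacobianMinor x q (t i) :=
          Finset.prod_congr rfl (fun i _ => hterm i)
      _ = ∑ Q ∈ Fintype.piFinset (fun _ : Fin m =>
            Finset.univ.filter (fun q : Fin d → Fin n => StrictMono q)),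
            ∏ i, (A.submatrix (P i) (Q i)).det * jacobianMinor x (Q i) (t i) := by
          rw [Finset.prod_univ_sum]
      _ = ∑ Q ∈ Finset.univ.filter
            (fun Q : Fin m → Fin d → Fin n => ∀ i, StrictMono (Q i)),
            (∏ i, (A.submatrix (P i) (Q i)).det) * ∏ i, jacobianMinor x (Q i) (t i) := by
          rw [hfil]
          exact Finset.sum_congr rfl fun Q _ => Finset.prod_mul_distrib
  rw [MeasureTheory.integral_congr_ae key,
    MeasureTheory.integral_finset_sum _ (fun Q _ => (hint Q).const_mul _)]
  refine Finset.sum_congr rfl fun Q _ => ?_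
  rw [MeasureTheory.integral_const_mul]

end
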